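/- There is a 2×2 random operator H(ω) = [[a + ω_1, c], [c̄, b + ω_2]] with c ≠ 0 and ω_1, ω_2 i.i.d. with a bounded continuous density ϱ (so Assumption R holds with ρ∞ = sup ϱ), for which no constant C makes the two-interval bound ℙ{σ(H(ω)) ∩ I_1 ≠ ∅ and σ(H(ω)) ∩ I_2 ≠ ∅} ≤ C · ρ∞² · |I_1| · |I_2| valid for all intervals I_1, I_2: explicitly, if ϱ is continuous and strictly positive at the pair (ω_1(E_1, E_2), ω_2(E_1, E_2)) corresponding to eigenvalues at the gap edge |E_1 − E_2| = 2|c|, then the joint eigenvalue density p(E_1, E_2) diverges like ((E_1 − E_2) − 2|c|)^{−1/2} as E_1 − E_2 ↓ 2|c|, so for every C > 0 there exist intervals I_1, I_2 with ℙ{E_1 ∈ I_1, E_2 ∈ I_2} > C · ρ∞² · |I_1| · |I_2|. -/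

import Mathlib

open MeasureTheory ProbabilityTheory
open scoped ENNReal

noncomputable section

set_option maxHeartbeats 2000000 in
/-- **The counterexample** (Section 2): for the `2 × 2` random operator
`H(ω) = [[a + ω₁, c], [c̄, b + ω₂]]` with `c ≠ 0` and `ω₁, ω₂` i.i.d. with a bounded
continuous density `ϱ` which is strictly positive at some pair corresponding to eigenvalues
at the gap edge (i.e. `ϱ(t) > 0` and `ϱ(t + a - b) > 0` for some `t`), no constant `C` makes
the two-interval Wegner-type bound valid: for every `C > 0` there are intervals
`I₁ = [u₁, v₁]`, `I₂ = [u₂, v₂]` with `ℙ{E₁ ∈ I₁, E₂ ∈ I₂} > C · ρmax² · |I₁| · |I₂|`. -/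
theorem two_by_two_counterexample (a b : ℝ) (c : ℂ) (hc : c ≠ 0)
    (ϱ : ℝ → ℝ) (ρmax : ℝ)
    (hmeas : Measurable ϱ) (hnn : ∀ t, 0 ≤ ϱ t)
    (hprob : IsProbabilityMeasure (volume.withDensity fun t => ENNReal.ofReal (ϱ t)))
    (hbd : ∀ t, ϱ t ≤ ρmax) (hcont : Continuous ϱ)
    (hpos : ∃ t : ℝ, 0 < ϱ t ∧ 0 < ϱ (t + a - b)) :
    ∀ C > (0 : ℝ), ∃ u₁ v₁ u₂ v₂ : ℝ, u₁ < v₁ ∧ u₂ < v₂ ∧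
      ENNReal.ofReal C * ENNReal.ofReal ρmax ^ 2 *
          volume (Set.Icc u₁ v₁) * volume (Set.Icc u₂ v₂)
        < ((volume.withDensity fun t => ENNReal.ofReal (ϱ t)).prod
            (volume.withDensity fun t => ENNReal.ofReal (ϱ t)))
            {ω : ℝ × ℝ |
              (ω.1 + ω.2 + a + b +
                Real.sqrt ((ω.1 - ω.2 + a - b) ^ 2 + 4 * ‖c‖ ^ 2)) / 2
                ∈ Set.Icc u₁ v₁ ∧
              (ω.1 + ω.2 + a + b -
                Real.sqrt ((ω.1 - ω.2 + a - b) ^ 2 + 4 * ‖c‖ ^ 2)) / 2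
                ∈ Set.Icc u₂ v₂} := by
  classical
  obtain ⟨t, ht1, ht2⟩ := hpos
  haveI := hprob
  set μ : Measure ℝ := volume.withDensity fun s => ENNReal.ofReal (ϱ s) with hμ
  have hρpos : 0 < ρmax := lt_of_lt_of_le ht1 (hbd t)
  set K := ‖c‖ with hKdef
  have hK : 0 < K := by
    rw [hKdef]; exact norm_pos_iff.mpr hc
  clear_value K
  have hμIcc : ∀ l u : ℝ, μ (Set.Icc l u) = ∫⁻ y in Set.Icc l u,
      ENNReal.ofReal (ϱ y) ∂volume := by
    intro l u
    rw [hμ, withDensity_apply _ measurableSet_Icc]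
  clear_value μ
  set k := 2 * K with hkdef
  have hk : 0 < k := by rw [hkdef]; linarith
  clear_value k
  set p := min (ϱ t) (ϱ (t + a - b)) / 2 with hpdef
  have hminpos : 0 < min (ϱ t) (ϱ (t + a - b)) := lt_min ht1 ht2
  have hp : 0 < p := by rw [hpdef]; exact div_pos hminpos two_pos
  have hpt : p < ϱ t := by
    have h := min_le_left (ϱ t) (ϱ (t + a - b)); rw [hpdef]; linarith
  have hpt' : p < ϱ (t + a - b) := by
    have h := min_le_right (ϱ t) (ϱ (t + a - b)); rw [hpdef]; linarith
  clear_value p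
  -- neighborhoods where ϱ ≥ p
  have hUopen : IsOpen {x : ℝ | p < ϱ x} := isOpen_lt continuous_const hcont
  obtain ⟨r₁, hr₁, hb₁⟩ := Metric.isOpen_iff.mp hUopen t hpt
  obtain ⟨r₂, hr₂, hb₂⟩ := Metric.isOpen_iff.mp hUopen _ hpt'
  set r := min r₁ r₂ / 2 with hrdef
  have hr : 0 < r := by rw [hrdef]; exact div_pos (lt_min hr₁ hr₂) two_pos
  have hrr₁ : r < r₁ := by
    have h := min_le_left r₁ r₂; rw [hrdef]; linarith
  have hrr₂ : r < r₂ := by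
    have h := min_le_right r₁ r₂; rw [hrdef]; linarith
  clear_value r
  have hnb1 : ∀ x : ℝ, |x - t| ≤ r → p ≤ ϱ x := by
    intro x hx
    have hxmem : x ∈ Metric.ball t r₁ := by
      rw [Metric.mem_ball, Real.dist_eq]; linarith
    exact (hb₁ hxmem).le
  have hnb2 : ∀ x : ℝ, |x - (t + a - b)| ≤ r → p ≤ ϱ x := by
    intro x hx
    have hxmem : x ∈ Metric.ball (t + a - b) r₂ := by
      rw [Metric.mem_ball, Real.dist_eq]; linarith
    exact (hb₂ hxmem).le
  intro C hC
  have hsk : 0 < Real.sqrt k := Real.sqrt_pos.mpr hk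
  have hCρ : 0 < 16 * C * ρmax ^ 2 :=
    mul_pos (mul_pos (by norm_num) hC) (pow_pos hρpos 2)
  set M := p ^ 2 * Real.sqrt k / (16 * C * ρmax ^ 2) with hMdef
  have hM : 0 < M := by
    rw [hMdef]; exact div_pos (mul_pos (pow_pos hp 2) hsk) hCρ
  have hMeq : M * (16 * C * ρmax ^ 2) = p ^ 2 * Real.sqrt k := by
    rw [hMdef]; exact div_mul_cancel₀ _ (ne_of_gt hCρ)
  clear_value M
  set ε := min (min (k / 4) (r / 2)) (min (r ^ 2 / k) (M ^ 2)) with hεdef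
  have hε : 0 < ε := by
    rw [hεdef]
    exact lt_min (lt_min (by linarith) (by linarith))
      (lt_min (div_pos (pow_pos hr 2) hk) (pow_pos hM 2))
  have hε1 : ε ≤ k / 4 := by
    rw [hεdef]; exact (min_le_left _ _).trans (min_le_left _ _)
  have hε2 : ε ≤ r / 2 := by
    rw [hεdef]; exact (min_le_left _ _).trans (min_le_right _ _)
  have hε3 : ε ≤ r ^ 2 / k := by
    rw [hεdef]; exact (min_le_right _ _).trans (min_le_left _ _)
  have hε4 : ε ≤ M ^ 2 := by
    rw [hεdef]; exact (min_le_right _ _).trans (min_le_right _ _)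
  clear_value ε
  have hkε : 0 < k * ε := mul_pos hk hε
  set δ := Real.sqrt (k * ε) with hδdef
  have hδ : 0 < δ := by rw [hδdef]; exact Real.sqrt_pos.mpr hkε
  have hδ2 : δ ^ 2 = k * ε := by rw [hδdef]; exact Real.sq_sqrt hkε.le
  have hδr : δ ≤ r := by
    rw [hδdef]
    have hkr : k * ε ≤ r ^ 2 := by
      have h := (le_div_iff₀ hk).mp hε3
      linarith
    calc Real.sqrt (k * ε) ≤ Real.sqrt (r ^ 2) := Real.sqrt_le_sqrt hkr
      _ = r := Real.sqrt_sq hr.le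
  have h2εδ : 2 * ε ≤ δ := by
    rw [hδdef]
    have hsq : (2 * ε) ^ 2 ≤ k * ε := by
      have h4k : 4 * ε ≤ k := by linarith
      calc (2 * ε) ^ 2 = (4 * ε) * ε := by ring
        _ ≤ k * ε := mul_le_mul_of_nonneg_right h4k hε.le
    calc 2 * ε = Real.sqrt ((2 * ε) ^ 2) := (Real.sqrt_sq (by linarith)).symm
      _ ≤ Real.sqrt (k * ε) := Real.sqrt_le_sqrt hsq
  have hδs' : δ = Real.sqrt k * Real.sqrt ε := by
    rw [hδdef]; exact Real.sqrt_mul hk.le ε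
  clear_value δ
  set s := Real.sqrt ε with hsdef
  have hs0 : 0 < s := by rw [hsdef]; exact Real.sqrt_pos.mpr hε
  have hss : s * s = ε := by rw [hsdef]; exact Real.mul_self_sqrt hε.le
  have hsε : s ≤ M := by
    rw [hsdef]
    calc Real.sqrt ε ≤ Real.sqrt (M ^ 2) := Real.sqrt_le_sqrt hε4
      _ = M := Real.sqrt_sq hM.le
  have hδs : δ = Real.sqrt k * s := hδs'
  clear_value s
  -- the small region in ω-space
  set A := Set.Icc t (t + δ / 4) with hAdef
  set S := {ω : ℝ × ℝ | ω.1 ∈ A ∧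
      2 * t + a - b - ω.1 - ε ≤ ω.2 ∧ ω.2 ≤ 2 * t + a - b - ω.1 + ε} with hSdef
  have hSm : MeasurableSet S := by
    have hSeq : S = (Prod.fst ⁻¹' A) ∩
        ({ω : ℝ × ℝ | 2 * t + a - b - ω.1 - ε ≤ ω.2} ∩
         {ω : ℝ × ℝ | ω.2 ≤ 2 * t + a - b - ω.1 + ε}) := by
      ext ω; simp [hSdef, and_assoc]
    rw [hSeq, hAdef]
    refine (measurable_fst (measurableSet_Icc)).inter (MeasurableSet.inter ?_ ?_)
    · exact measurableSet_le (by fun_prop) (by fun_prop)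
    · exact measurableSet_le (by fun_prop) (by fun_prop)
  -- lower bound for μ on intervals where ϱ ≥ p
  have hIcc : ∀ l u : ℝ, (∀ y ∈ Set.Icc l u, p ≤ ϱ y) →
      ENNReal.ofReal p * ENNReal.ofReal (u - l) ≤ μ (Set.Icc l u) := by
    intro l u hlb
    rw [hμIcc, ← Real.volume_Icc]
    calc ENNReal.ofReal p * volume (Set.Icc l u)
        = ∫⁻ _ in Set.Icc l u, ENNReal.ofReal p := (setLIntegral_const _ _).symm
      _ ≤ ∫⁻ y in Set.Icc l u, ENNReal.ofReal (ϱ y) :=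
          setLIntegral_mono hmeas.ennreal_ofReal
            (fun y hy => ENNReal.ofReal_le_ofReal (hlb y hy))
  have hμA : ENNReal.ofReal p * ENNReal.ofReal (δ / 4) ≤ μ A := by
    have h := hIcc t (t + δ / 4) ?_
    · rw [hAdef]
      rwa [show t + δ / 4 - t = δ / 4 by ring] at h
    · intro y hy
      rw [Set.mem_Icc] at hy
      exact hnb1 y (abs_le.mpr ⟨by linarith, by linarith⟩)
  have hsect : ∀ x ∈ A, ENNReal.ofReal p * ENNReal.ofReal (2 * ε) ≤
      μ (Prod.mk x ⁻¹' S) := by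
    intro x hx
    have hxA := hx
    rw [hAdef, Set.mem_Icc] at hxA
    have hpre : Prod.mk x ⁻¹' S =
        Set.Icc (2 * t + a - b - x - ε) (2 * t + a - b - x + ε) := by
      ext y
      simp only [hSdef, Set.mem_preimage, Set.mem_setOf_eq, Set.mem_Icc, hx, true_and]
    rw [hpre]
    have hlb : ∀ y ∈ Set.Icc (2 * t + a - b - x - ε) (2 * t + a - b - x + ε),
        p ≤ ϱ y := by
      intro y hy
      rw [Set.mem_Icc] at hy
      refine hnb2 y (abs_le.mpr ⟨by linarith, by linarith⟩)
    have h := hIcc _ _ hlb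
    rwa [show 2 * t + a - b - x + ε - (2 * t + a - b - x - ε) = 2 * ε by ring] at h
  have hmain : ENNReal.ofReal p * ENNReal.ofReal (2 * ε) *
      (ENNReal.ofReal p * ENNReal.ofReal (δ / 4)) ≤ (μ.prod μ) S := by
    rw [Measure.prod_apply hSm]
    calc ENNReal.ofReal p * ENNReal.ofReal (2 * ε) *
          (ENNReal.ofReal p * ENNReal.ofReal (δ / 4))
        ≤ ENNReal.ofReal p * ENNReal.ofReal (2 * ε) * μ A :=
          mul_le_mul_right hμA _
      _ = ∫⁻ _ in A, ENNReal.ofReal p * ENNReal.ofReal (2 * ε) ∂μ :=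
          (setLIntegral_const _ _).symm
      _ ≤ ∫⁻ x in A, μ (Prod.mk x ⁻¹' S) ∂μ :=
          setLIntegral_mono (measurable_measure_prodMk_left hSm) hsect
      _ ≤ ∫⁻ x, μ (Prod.mk x ⁻¹' S) ∂μ := setLIntegral_le_lintegral _ _
  refine ⟨t + a + K - ε, t + a + K + ε, t + a - K - ε, t + a - K + ε,
    by linarith, by linarith, ?_⟩
  have hST : S ⊆ {ω : ℝ × ℝ |
      (ω.1 + ω.2 + a + b +
        Real.sqrt ((ω.1 - ω.2 + a - b) ^ 2 + 4 * K ^ 2)) / 2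
        ∈ Set.Icc (t + a + K - ε) (t + a + K + ε) ∧
      (ω.1 + ω.2 + a + b -
        Real.sqrt ((ω.1 - ω.2 + a - b) ^ 2 + 4 * K ^ 2)) / 2
        ∈ Set.Icc (t + a - K - ε) (t + a - K + ε)} := by
    rintro ⟨x, y⟩ ⟨hxA, hy1, hy2⟩
    rw [hAdef, Set.mem_Icc] at hxA
    simp only [Set.mem_setOf_eq, Set.mem_Icc]
    have hd2 : (x - y + a - b) ^ 2 ≤ 2 * K * ε := by
      have hdu : x - y + a - b ≤ δ := by linarith [hxA.2]
      have hdl : -δ ≤ x - y + a - b := by linarith [hxA.1]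
      have hsq := sq_le_sq' hdl hdu
      rw [hδ2, hkdef] at hsq
      linarith
    have hRlow : 2 * K ≤ Real.sqrt ((x - y + a - b) ^ 2 + 4 * K ^ 2) := by
      rw [show 2 * K = Real.sqrt ((2 * K) ^ 2) from (Real.sqrt_sq (by linarith)).symm]
      apply Real.sqrt_le_sqrt
      have h := sq_nonneg (x - y + a - b)
      ring_nf
      ring_nf at h
      linarith
    have hRhigh : Real.sqrt ((x - y + a - b) ^ 2 + 4 * K ^ 2) ≤ 2 * K + ε / 2 := by
      rw [show 2 * K + ε / 2 = Real.sqrt ((2 * K + ε / 2) ^ 2) from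
        (Real.sqrt_sq (by linarith)).symm]
      apply Real.sqrt_le_sqrt
      have h1 := sq_nonneg ε
      have h2 := hd2
      ring_nf
      ring_nf at h1 h2
      linarith
    exact ⟨⟨by linarith, by linarith⟩, ⟨by linarith, by linarith⟩⟩
  -- the final chain
  have hpk : 0 < p ^ 2 * Real.sqrt k := mul_pos (pow_pos hp 2) hsk
  have h4Cρ : (0:ℝ) ≤ 4 * C * ρmax ^ 2 :=
    le_of_lt (mul_pos (mul_pos (by norm_num) hC) (pow_pos hρpos 2))
  have h3 : 4 * C * ρmax ^ 2 * s < p ^ 2 * Real.sqrt k / 2 := by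
    linarith [mul_le_mul_of_nonneg_left hsε h4Cρ, hMeq, hpk]
  have hreal : C * ρmax ^ 2 * (2 * ε) * (2 * ε) < p * (2 * ε) * (p * (δ / 4)) := by
    have h4 := mul_lt_mul_of_pos_right h3
      (show (0:ℝ) < s * s * s from mul_pos (mul_pos hs0 hs0) hs0)
    calc C * ρmax ^ 2 * (2 * ε) * (2 * ε)
        = 4 * C * ρmax ^ 2 * s * (s * s * s) := by rw [← hss]; ring
      _ < p ^ 2 * Real.sqrt k / 2 * (s * s * s) := h4
      _ = p * (2 * ε) * (p * (δ / 4)) := by rw [hδs, ← hss]; ring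
  have hCρε : (0:ℝ) ≤ C * ρmax ^ 2 := le_of_lt (mul_pos hC (pow_pos hρpos 2))
  have hεnn : (0:ℝ) ≤ 2 * ε := by linarith
  calc ENNReal.ofReal C * ENNReal.ofReal ρmax ^ 2 *
        volume (Set.Icc (t + a + K - ε) (t + a + K + ε)) *
        volume (Set.Icc (t + a - K - ε) (t + a - K + ε))
      = ENNReal.ofReal (C * ρmax ^ 2 * (2 * ε) * (2 * ε)) := by
        rw [Real.volume_Icc, Real.volume_Icc,
          show t + a + K + ε - (t + a + K - ε) = 2 * ε by ring,
          show t + a - K + ε - (t + a - K - ε) = 2 * ε by ring,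
          ← ENNReal.ofReal_pow hρpos.le, ← ENNReal.ofReal_mul hC.le,
          ← ENNReal.ofReal_mul hCρε,
          ← ENNReal.ofReal_mul
            (le_of_lt (mul_pos (mul_pos hC (pow_pos hρpos 2)) (by linarith)))]
    _ < ENNReal.ofReal (p * (2 * ε) * (p * (δ / 4))) :=
        (ENNReal.ofReal_lt_ofReal_iff
          (mul_pos (mul_pos hp (by linarith)) (mul_pos hp (by linarith)))).mpr hreal
    _ = ENNReal.ofReal p * ENNReal.ofReal (2 * ε) *
        (ENNReal.ofReal p * ENNReal.ofReal (δ / 4)) := by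
        rw [ENNReal.ofReal_mul (mul_pos hp (by linarith : (0:ℝ) < 2 * ε)).le,
          ENNReal.ofReal_mul hp.le, ENNReal.ofReal_mul hp.le]
    _ ≤ (μ.prod μ) S := hmain
    _ ≤ _ := measure_mono hST
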